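/- Let Q be a natural number, let K₀ and C be real numbers with K₀ ≠ 0, and let f : ℕ → ℝ be such that f(S) ≠ 0 for some S with 0 ≤ S ≤ Q. Suppose that: (i) for every s with 0 ≤ s ≤ Q, the sum over S from s to Q of f(S)·C(S,s)·(2K₀·(Q − S·(s+2)/(s+1) + s/(s+1)) + C) equals 0; and (ii) for every r with 0 ≤ r ≤ Q, the sum over R from r to Q of f(Q−R)·C(R,r)·(2K₀·(Q − R·(r+2)/(r+1) + r/(r+1)) + C) equals 0. Then C = 0. -/

import Mathlib

open Finset

lemma rec_lemma (Q : ℕ) (K₀ c : ℝ) (hK : K₀ ≠ 0) (g : ℕ → ℝ) (s : ℕ) (hs : s ≤ Q)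
    (hg : ∑ S ∈ Finset.Icc s Q,
        g S * (Nat.choose S s : ℝ) *
          (2 * K₀ * ((Q : ℝ) - (S : ℝ) * ((s : ℝ) + 2) / ((s : ℝ) + 1) + (s : ℝ) / ((s : ℝ) + 1))
            + 2 * K₀ * c) = 0) :
    (∑ S ∈ Finset.Icc s Q, g S * (Nat.choose S s : ℝ)) * ((Q : ℝ) + c - s)
      = ((s : ℝ) + 2) * ∑ S ∈ Finset.Icc (s+1) Q, g S * (Nat.choose S (s+1) : ℝ) := by
  have hs1 : ((s : ℝ) + 1) ≠ 0 := by positivity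
  have h2K : (2 * K₀ : ℝ) ≠ 0 := by simp [hK]
  have key : ∀ S ∈ Finset.Icc s Q,
      g S * (Nat.choose S s : ℝ) *
          (2 * K₀ * ((Q : ℝ) - (S : ℝ) * ((s : ℝ) + 2) / ((s : ℝ) + 1) + (s : ℝ) / ((s : ℝ) + 1))
            + 2 * K₀ * c)
        = 2 * K₀ * (g S * (Nat.choose S s : ℝ) * ((Q : ℝ) + c - s)
            - ((s : ℝ) + 2) * (g S * (Nat.choose S (s+1) : ℝ))) := by
    intro S hS
    obtain ⟨hsS, hSQ⟩ := Finset.mem_Icc.mp hS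
    have hb : (Nat.choose S (s+1) : ℝ) * ((s : ℝ) + 1) = (Nat.choose S s : ℝ) * ((S : ℝ) - s) := by
      calc (Nat.choose S (s+1) : ℝ) * ((s : ℝ) + 1)
          = ((Nat.choose S (s+1) * (s+1) : ℕ) : ℝ) := by push_cast; ring
        _ = ((Nat.choose S s * (S - s) : ℕ) : ℝ) := by rw [Nat.choose_succ_right_eq S s]
        _ = (Nat.choose S s : ℝ) * ((S : ℝ) - s) := by push_cast [Nat.cast_sub hsS]; ring
    field_simp
    linear_combination ((g S)*(((s:ℝ)+2))) * hb
  rw [Finset.sum_congr rfl key, ← Finset.mul_sum] at hg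
  have hsum : ∑ S ∈ Finset.Icc s Q,
      (g S * (Nat.choose S s : ℝ) * ((Q : ℝ) + c - s)
        - ((s : ℝ) + 2) * (g S * (Nat.choose S (s+1) : ℝ))) = 0 := by
    rcases mul_eq_zero.mp hg with h | h
    · exact absurd h h2K
    · exact h
  have hsplit : Finset.Icc s Q = insert s (Finset.Icc (s+1) Q) := by
    ext x; simp only [Finset.mem_Icc, Finset.mem_insert]; omega
  rw [Finset.sum_sub_distrib, sub_eq_zero] at hsum
  rw [← Finset.sum_mul] at hsum
  rw [hsum, ← Finset.mul_sum]
  congr 1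
  rw [hsplit, Finset.sum_insert (by simp)]
  simp [Nat.choose_succ_self]


/-- Theorem 1 of the paper (`C = 0`): if `K₀ ≠ 0` and a nontrivial `f` satisfies
the boundary constraints (4.5a) and (4.6) with `ξ₀ = 1`, then `C = 0`. -/
theorem stmt_2 (Q : ℕ) (K₀ C : ℝ) (hK : K₀ ≠ 0) (f : ℕ → ℝ)
    (hf : ∃ S : ℕ, S ≤ Q ∧ f S ≠ 0)
    (h1 : ∀ s : ℕ, s ≤ Q →
      ∑ S ∈ Finset.Icc s Q,
        f S * (Nat.choose S s : ℝ) *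
          (2 * K₀ * ((Q : ℝ) - (S : ℝ) * ((s : ℝ) + 2) / ((s : ℝ) + 1) + (s : ℝ) / ((s : ℝ) + 1))
            + C) = 0)
    (h2 : ∀ r : ℕ, r ≤ Q →
      ∑ R ∈ Finset.Icc r Q,
        f (Q - R) * (Nat.choose R r : ℝ) *
          (2 * K₀ * ((Q : ℝ) - (R : ℝ) * ((r : ℝ) + 2) / ((r : ℝ) + 1) + (r : ℝ) / ((r : ℝ) + 1))
            + C) = 0) :
    C = 0 := by
  by_contra hC
  obtain ⟨c, hc⟩ : ∃ c : ℝ, C = 2 * K₀ * c := ⟨C / (2 * K₀), by field_simp⟩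
  have hc0 : c ≠ 0 := fun h => hC (by rw [hc, h, mul_zero])
  rw [hc] at h1 h2
  -- support set and its max
  set T : Finset ℕ := (Finset.range (Q+1)).filter (fun S => f S ≠ 0) with hT
  have hTne : T.Nonempty := by
    obtain ⟨S0, hS0Q, hS0⟩ := hf
    exact ⟨S0, by simp [hT, Finset.mem_filter, Finset.mem_range, Nat.lt_succ_iff, hS0Q, hS0]⟩
  set M : ℕ := T.max' hTne with hMdef
  have hMT : M ∈ T := T.max'_mem hTne
  have hMQ : M ≤ Q := by
    have := (Finset.mem_filter.mp hMT).1
    simpa [Nat.lt_succ_iff] using Finset.mem_range.mp this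
  have hfM : f M ≠ 0 := (Finset.mem_filter.mp hMT).2
  have hle : ∀ S, S ≤ Q → f S ≠ 0 → S ≤ M := by
    intro S h1' h2'
    exact Finset.le_max' T S (by simp [hT, Finset.mem_filter, Finset.mem_range, Nat.lt_succ_iff, h1', h2'])
  set b : ℕ → ℝ := fun s => ∑ S ∈ Finset.Icc s Q, f S * (Nat.choose S s : ℝ) with hbdef
  have hb0 : ∀ s, M < s → b s = 0 := by
    intro s hMs
    apply Finset.sum_eq_zero
    intro S hS
    obtain ⟨h1', h2'⟩ := Finset.mem_Icc.mp hS
    have : f S = 0 := by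
      by_contra hfS
      exact absurd (hle S h2' hfS) (by omega)
    rw [this, zero_mul]
  have hrecb : ∀ s, s ≤ Q → b s * ((Q : ℝ) + c - s) = ((s : ℝ) + 2) * b (s+1) :=
    fun s hs => rec_lemma Q K₀ c hK f s hs (h1 s hs)
  have hbM : b M = f M := by
    have hsplit : Finset.Icc M Q = insert M (Finset.Icc (M+1) Q) := by
      ext x; simp only [Finset.mem_Icc, Finset.mem_insert]; omega
    have htail : ∑ S ∈ Finset.Icc (M+1) Q, f S * (Nat.choose S M : ℝ) = 0 := by
      apply Finset.sum_eq_zero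
      intro S hS
      obtain ⟨h1', h2'⟩ := Finset.mem_Icc.mp hS
      have : f S = 0 := by
        by_contra hfS
        exact absurd (hle S h2' hfS) (by omega)
      rw [this, zero_mul]
    rw [hbdef]
    simp only
    rw [hsplit, Finset.sum_insert (by simp), htail]
    simp
  have hQc : (Q : ℝ) + c = M := by
    have h := hrecb M hMQ
    rw [hbM, hb0 (M+1) (lt_add_one M), mul_zero] at h
    rcases mul_eq_zero.mp h with h' | h'
    · exact absurd h' hfM
    · linarith [sub_eq_zero.mp h']
  -- b (M - k) ≠ 0 for all k
  have hbne : ∀ k, b (M - k) ≠ 0 := by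
    intro k
    induction k with
    | zero => simpa [hbM] using hfM
    | succ k ih =>
      by_cases hk : M ≤ k
      · have he : M - (k+1) = M - k := by omega
        rw [he]; exact ih
      · push_neg at hk
        set s := M - (k+1) with hsdef
        have hs1 : s + 1 = M - k := by omega
        have hsM : s < M := by omega
        have hsQ : s ≤ Q := by omega
        have hr := hrecb s hsQ
        intro h0
        rw [h0, zero_mul] at hr
        have hb1 : b (s+1) = 0 := by
          have hne : ((s : ℝ) + 2) ≠ 0 := by positivity
          rcases mul_eq_zero.mp hr.symm with h' | h'
          · exact absurd h' hne
          · exact h'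
        rw [hs1] at hb1
        exact ih hb1
  have hb0ne : b 0 ≠ 0 := by
    have := hbne M
    simpa using this
  -- sums B0, B1
  set B0 : ℝ := ∑ S ∈ Finset.range (Q+1), f S with hB0
  set B1 : ℝ := ∑ S ∈ Finset.range (Q+1), f S * (S : ℝ) with hB1
  have hIcc : Finset.Icc 0 Q = Finset.range (Q+1) := by
    ext x; simp [Nat.lt_succ_iff]
  have e1 : b 0 = B0 := by
    rw [hbdef]; simp only
    rw [hIcc]; simp [hB0]
  have hsplit0 : Finset.Icc 0 Q = insert 0 (Finset.Icc 1 Q) := by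
    ext x; simp only [Finset.mem_Icc, Finset.mem_insert]; omega
  have e2 : b 1 = B1 := by
    rw [hbdef]; simp only
    have : ∑ S ∈ Finset.Icc 1 Q, f S * (Nat.choose S 1 : ℝ)
        = ∑ S ∈ Finset.Icc 0 Q, f S * (Nat.choose S 1 : ℝ) := by
      rw [hsplit0, Finset.sum_insert (by simp)]
      simp
    rw [this, hIcc]
    simp [Nat.choose_one_right, hB1]
  -- the reflected side
  have e3 : ∑ R ∈ Finset.Icc 0 Q, f (Q - R) * (Nat.choose R 0 : ℝ) = B0 := by
    rw [hIcc]
    simp only [Nat.choose_zero_right, Nat.cast_one, mul_one]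
    have := Finset.sum_range_reflect (fun j => f j) (Q+1)
    simpa using this
  have e4 : ∑ R ∈ Finset.Icc 1 Q, f (Q - R) * (Nat.choose R 1 : ℝ) = (Q : ℝ) * B0 - B1 := by
    have h01 : ∑ R ∈ Finset.Icc 1 Q, f (Q - R) * (Nat.choose R 1 : ℝ)
        = ∑ R ∈ Finset.Icc 0 Q, f (Q - R) * (Nat.choose R 1 : ℝ) := by
      rw [hsplit0, Finset.sum_insert (by simp)]
      simp
    rw [h01, hIcc]
    simp only [Nat.choose_one_right]
    have hrefl := Finset.sum_range_reflect (fun j => f (Q - j) * (j : ℝ)) (Q+1)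
    have hstep : ∑ j ∈ Finset.range (Q+1), f (Q - j) * (j : ℝ)
        = ∑ j ∈ Finset.range (Q+1), f j * ((Q : ℝ) - j) := by
      rw [← hrefl]
      apply Finset.sum_congr rfl
      intro j hj
      have hjQ : j ≤ Q := Nat.lt_succ_iff.mp (Finset.mem_range.mp hj)
      have h1' : Q + 1 - 1 - j = Q - j := by omega
      have h2' : Q - (Q - j) = j := by omega
      rw [h1', h2', Nat.cast_sub hjQ]
    rw [hstep]
    rw [hB0, hB1, Finset.mul_sum, ← Finset.sum_sub_distrib]
    apply Finset.sum_congr rfl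
    intro j _
    ring
  -- the two key equations
  have eqA : B0 * ((Q : ℝ) + c) = 2 * B1 := by
    have h := hrecb 0 (Nat.zero_le Q)
    rw [e1, e2] at h
    push_cast at h
    linarith
  have eqB : B0 * ((Q : ℝ) + c) = 2 * ((Q : ℝ) * B0 - B1) := by
    have h := rec_lemma Q K₀ c hK (fun R => f (Q - R)) 0 (Nat.zero_le Q) (h2 0 (Nat.zero_le Q))
    rw [e3, e4] at h
    push_cast at h
    linarith
  have hfinal : B0 * c = 0 := by linear_combination (1/2 : ℝ) * eqA + (1/2 : ℝ) * eqB
  rcases mul_eq_zero.mp hfinal with h' | h'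
  · rw [e1] at hb0ne; exact hb0ne h'
  · exact hc0 h'
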